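/- Let G be a graph on n vertices and k a nonnegative integer. Suppose u and v are nonadjacent vertices of G with deg(u) + deg(v) ≥ 2k + 1. If G + uv has a matching of size k + 1, then G has a matching of size k + 1. -/

import Mathlib

/-- `G` has a matching of size `m`: a set of `m` pairwise disjoint edges,
formalized as a subgraph all of whose vertices have a unique neighbor. -/
def hasMatchingOfSize {V : Type*} (G : SimpleGraph V) (m : ℕ) : Prop :=
  ∃ M : SimpleGraph.Subgraph G, M.IsMatching ∧ M.edgeSet.ncard = m

open SimpleGraph

/-- Removing the two endpoints of an edge of a matching yields a matching
(possibly viewed in a smaller ambient graph). -/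
lemma restrict_matching {V : Type*} {G H : SimpleGraph V} {M : H.Subgraph}
    (hM : M.IsMatching) {a b : V} (hab : M.Adj a b)
    (hG : ∀ x y, M.Adj x y → s(x, y) ≠ s(a, b) → G.Adj x y) :
    ∃ M' : G.Subgraph, M'.IsMatching ∧ M'.verts = M.verts \ {a, b} ∧
      M'.edgeSet = M.edgeSet \ {s(a, b)} := by
  classical
  -- key: if M.Adj x y and x ∉ {a,b} and s(x,y) ≠ s(a,b) ... use uniqueness
  have huniq : ∀ x y, M.Adj x y → (x = a → y = b) ∧ (x = b → y = a) := by
    intro x y hxy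
    constructor
    · rintro rfl
      exact ((hM (M.edge_vert hab)).unique hxy hab)
    · rintro rfl
      exact ((hM (M.edge_vert hab.symm)).unique hxy hab.symm)
  refine ⟨⟨M.verts \ {a, b}, fun x y => M.Adj x y ∧ x ∉ ({a, b} : Set V) ∧ y ∉ ({a, b} : Set V),
      ?_, ?_, ?_⟩, ?_, rfl, ?_⟩
  · rintro x y ⟨hxy, hx, hy⟩
    refine hG x y hxy ?_
    intro hsab
    rw [Sym2.eq_iff] at hsab
    rcases hsab with ⟨rfl, rfl⟩ | ⟨rfl, rfl⟩
    · exact hx (by simp)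
    · exact hx (by simp)
  · rintro x y ⟨hxy, hx, _⟩
    exact ⟨M.edge_vert hxy, hx⟩
  · refine ⟨?_⟩
    rintro x y ⟨hxy, hx, hy⟩
    exact ⟨hxy.symm, hy, hx⟩
  · rintro w ⟨hw, hwab⟩
    obtain ⟨p, hp, hpu⟩ := hM hw
    have hpab : p ∉ ({a, b} : Set V) := by
      rintro (rfl | rfl)
      · exact hwab (by simp [(huniq w p hp).1.mt, ((huniq p w hp.symm).1 rfl)])
      · exact hwab (by simp [((huniq p w hp.symm).2 rfl)])
    refine ⟨p, ⟨hp, hwab, hpab⟩, ?_⟩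
    rintro q ⟨hq, _, _⟩
    exact hpu q hq
  · ext e
    induction e using Sym2.ind with
    | _ x y =>
      simp only [Subgraph.mem_edgeSet, Set.mem_diff, Set.mem_singleton_iff]
      constructor
      · rintro ⟨hxy, hx, hy⟩
        refine ⟨hxy, ?_⟩
        intro hsab
        rw [Sym2.eq_iff] at hsab
        rcases hsab with ⟨rfl, rfl⟩ | ⟨rfl, rfl⟩
        · exact hx (by simp)
        · exact hx (by simp)
      · rintro ⟨hxy, hne⟩
        refine ⟨hxy, ?_, ?_⟩
        · rintro (rfl | rfl)
          · exact hne (by rw [(huniq x y hxy).1 rfl])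
          · exact hne (by rw [(huniq x y hxy).2 rfl, Sym2.eq_swap])
        · rintro (rfl | rfl)
          · exact hne (by rw [(huniq y x hxy.symm).1 rfl, Sym2.eq_swap])
          · exact hne (by rw [(huniq y x hxy.symm).2 rfl])

open Classical in
/-- The edge of the matching at a vertex. -/
private noncomputable def pedge {V : Type*} {G : SimpleGraph V} (M : G.Subgraph) (w : V) :
    Sym2 V :=
  if h : ∃ p, M.Adj w p then s(w, h.choose) else s(w, w)

/-- In a matching, the number of vertices is twice the number of edges. -/
lemma matching_card {V : Type*} [Fintype V] {G : SimpleGraph V} {M : G.Subgraph}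
    (hM : M.IsMatching) : M.verts.ncard = 2 * M.edgeSet.ncard := by
  classical
  have hmaps : ∀ w ∈ M.verts.toFinset, pedge M w ∈ M.edgeSet.toFinset := by
    intro w hw
    rw [Set.mem_toFinset] at hw
    obtain ⟨p, hp, -⟩ := hM hw
    have hex : ∃ q, M.Adj w q := ⟨p, hp⟩
    simp only [pedge, dif_pos hex, Set.mem_toFinset]
    exact hex.choose_spec
  have hsum := Finset.card_eq_sum_card_fiberwise hmaps
  have hfib : ∀ e ∈ M.edgeSet.toFinset,
      (M.verts.toFinset.filter (fun w => pedge M w = e)).card = 2 := by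
    intro e he
    rw [Set.mem_toFinset] at he
    induction e using Sym2.ind with
    | _ a b =>
      rw [Subgraph.mem_edgeSet] at he
      have hab : a ≠ b := (M.adj_sub he).ne
      have : M.verts.toFinset.filter (fun w => pedge M w = s(a, b)) = {a, b} := by
        ext w
        simp only [Finset.mem_filter, Set.mem_toFinset, Finset.mem_insert,
          Finset.mem_singleton]
        constructor
        · rintro ⟨hw, hfw⟩
          obtain ⟨p, hp, -⟩ := hM hw
          have hex : ∃ q, M.Adj w q := ⟨p, hp⟩
          simp only [pedge, dif_pos hex] at hfw
          rw [Sym2.eq_iff] at hfw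
          rcases hfw with ⟨h1, _⟩ | ⟨h1, _⟩
          · exact Or.inl h1
          · exact Or.inr h1
        · rintro (rfl | rfl)
          · refine ⟨M.edge_vert he, ?_⟩
            have hex : ∃ q, M.Adj w q := ⟨b, he⟩
            simp only [pedge, dif_pos hex]
            have := (hM (M.edge_vert he)).unique hex.choose_spec he
            rw [this]
          · refine ⟨M.edge_vert he.symm, ?_⟩
            have hex : ∃ q, M.Adj w q := ⟨a, he.symm⟩
            simp only [pedge, dif_pos hex]
            have := (hM (M.edge_vert he.symm)).unique hex.choose_spec he.symm
            rw [this, Sym2.eq_swap]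
      rw [this, Finset.card_insert_of_notMem (by simpa using hab),
        Finset.card_singleton]
  rw [Finset.sum_congr rfl hfib, Finset.sum_const, smul_eq_mul] at hsum
  rw [Set.ncard_eq_toFinset_card', Set.ncard_eq_toFinset_card', hsum, mul_comm]

/-- Adding an edge disjoint from a matching yields a matching. -/
lemma extend_matching {V : Type*} {G : SimpleGraph V} {M : G.Subgraph}
    (hM : M.IsMatching) {a b : V} (hab : G.Adj a b)
    (ha : a ∉ M.verts) (hb : b ∉ M.verts) :
    ∃ M' : G.Subgraph, M'.IsMatching ∧ M'.edgeSet = insert s(a, b) M.edgeSet ∧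
      M'.verts = insert a (insert b M.verts) := by
  refine ⟨G.subgraphOfAdj hab ⊔ M, ?_, ?_, ?_⟩
  · refine (Subgraph.IsMatching.subgraphOfAdj hab).sup hM ?_
    rw [(Subgraph.IsMatching.subgraphOfAdj hab).support_eq_verts,
      hM.support_eq_verts, SimpleGraph.subgraphOfAdj_verts]
    rw [Set.disjoint_left]
    rintro w (rfl | rfl) <;> assumption
  · rw [Subgraph.edgeSet_sup, SimpleGraph.edgeSet_subgraphOfAdj, Set.singleton_union]
  · rw [Subgraph.verts_sup, SimpleGraph.subgraphOfAdj_verts, Set.insert_union,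
      Set.singleton_union]

private lemma edge_vert_left {V : Type*} {G : SimpleGraph V} {M : G.Subgraph} {a b : V}
    (h : s(a, b) ∈ M.edgeSet) : a ∈ M.verts :=
  M.edge_vert (Subgraph.mem_edgeSet.mp h)

open Classical in
private noncomputable def pvert {V : Type*} {G : SimpleGraph V} (M : G.Subgraph) (w : V) : V :=
  if h : ∃ p, M.Adj w p then h.choose else w

private lemma pvert_adj {V : Type*} {G : SimpleGraph V} {M : G.Subgraph} {w : V}
    (h : ∃ p, M.Adj w p) : M.Adj w (pvert M w) := by
  classical
  simp only [pvert, dif_pos h]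
  exact h.choose_spec

theorem stmt_7 {V : Type*} [Fintype V] (G : SimpleGraph V) (n k : ℕ)
    (hn : Fintype.card V = n) (u v : V) (huv : ¬ G.Adj u v) (hne : u ≠ v)
    (hdeg : 2 * k + 1 ≤ (G.neighborSet u).ncard + (G.neighborSet v).ncard)
    (h : hasMatchingOfSize (G ⊔ SimpleGraph.fromEdgeSet {s(u, v)}) (k + 1)) :
    hasMatchingOfSize G (k + 1) := by
  classical
  obtain ⟨M, hM, hcard⟩ := h
  have hGadj : ∀ x y, M.Adj x y → s(x, y) ≠ s(u, v) → G.Adj x y := by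
    intro x y hxy hne'
    rcases M.adj_sub hxy with hG | hF
    · exact hG
    · rw [SimpleGraph.fromEdgeSet_adj] at hF
      exact absurd hF.1 hne'
  by_cases hMuv : M.Adj u v
  · -- the edge uv is used by M; modify the matching
    obtain ⟨M₀, hM₀, hverts₀, hedges₀⟩ := restrict_matching hM hMuv hGadj
    have huvmem : s(u, v) ∈ M.edgeSet := Subgraph.mem_edgeSet.mpr hMuv
    have hk : M₀.edgeSet.ncard = k := by
      rw [hedges₀, Set.ncard_diff_singleton_of_mem huvmem, hcard]
      omega
    have hu0 : u ∉ M₀.verts := by rw [hverts₀]; simp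
    have hv0 : v ∉ M₀.verts := by rw [hverts₀]; simp
    by_cases hA : ∃ w, G.Adj u w ∧ w ∉ M₀.verts
    · obtain ⟨w, hw, hwv⟩ := hA
      obtain ⟨M', hM', hedges', -⟩ := extend_matching hM₀ hw hu0 hwv
      refine ⟨M', hM', ?_⟩
      rw [hedges', Set.ncard_insert_of_notMem (fun hmem => hu0 (edge_vert_left hmem))
        (Set.toFinite _), hk]
    by_cases hB : ∃ w, G.Adj v w ∧ w ∉ M₀.verts
    · obtain ⟨w, hw, hwv⟩ := hB
      obtain ⟨M', hM', hedges', -⟩ := extend_matching hM₀ hw hv0 hwv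
      refine ⟨M', hM', ?_⟩
      rw [hedges', Set.ncard_insert_of_notMem (fun hmem => hv0 (edge_vert_left hmem))
        (Set.toFinite _), hk]
    push_neg at hA hB
    -- all neighbors of u and v are covered by M₀
    have hk' : M₀.edgeSet.ncard = k := hk
    let B := pvert M₀ '' G.neighborSet v
    have hadjB : ∀ w ∈ G.neighborSet v, M₀.Adj w (pvert M₀ w) := by
      intro w hw
      obtain ⟨p, hp, -⟩ := hM₀ (hB w hw)
      exact pvert_adj ⟨p, hp⟩
    have hsubA : G.neighborSet u ⊆ M₀.verts := fun w hw => hA w hw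
    have hsubB : B ⊆ M₀.verts := by
      rintro x ⟨w, hw, rfl⟩
      exact M₀.edge_vert (hadjB w hw).symm
    have hinj : Set.InjOn (pvert M₀) (G.neighborSet v) := by
      intro w1 h1 w2 h2 heq
      have ha1 := hadjB w1 h1
      have ha2 := hadjB w2 h2
      rw [heq] at ha1
      exact (hM₀ (M₀.edge_vert ha2.symm)).unique ha1.symm ha2.symm
    have hBcard : B.ncard = (G.neighborSet v).ncard := Set.ncard_image_of_injOn hinj
    have hvcard : M₀.verts.ncard = 2 * k := by rw [matching_card hM₀, hk]
    have hUB : (G.neighborSet u ∪ B).ncard ≤ 2 * k := by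
      rw [← hvcard]
      exact Set.ncard_le_ncard (Set.union_subset hsubA hsubB) (Set.toFinite _)
    have hsum := Set.ncard_union_add_ncard_inter (G.neighborSet u) B
      (Set.toFinite _) (Set.toFinite _)
    rw [hBcard] at hsum
    have hABne : (G.neighborSet u ∩ B).Nonempty := by
      rw [Set.nonempty_iff_ne_empty]
      intro hemp
      rw [hemp, Set.ncard_empty] at hsum
      omega
    obtain ⟨x, hxA, w, hwv, hxw⟩ := hABne
    have hux : G.Adj u x := hxA
    have hvy : G.Adj v w := hwv
    have hxy : M₀.Adj x w := by rw [← hxw]; exact (hadjB w hwv).symm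
    have hxmem : x ∈ M₀.verts := M₀.edge_vert hxy
    have hymem : w ∈ M₀.verts := M₀.edge_vert hxy.symm
    obtain ⟨M₂, hM₂, hverts₂, hedges₂⟩ :=
      restrict_matching hM₀ hxy (fun _ _ h _ => M₀.adj_sub h)
    have hxymem : s(x, w) ∈ M₀.edgeSet := Subgraph.mem_edgeSet.mpr hxy
    have hk1 : 1 ≤ k := by
      rw [← hk]
      exact (Set.ncard_pos (Set.toFinite _)).mpr ⟨_, hxymem⟩
    have hcard₂ : M₂.edgeSet.ncard = k - 1 := by
      rw [hedges₂, Set.ncard_diff_singleton_of_mem hxymem, hk]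
    have hu2 : u ∉ M₂.verts := by rw [hverts₂]; exact fun h => hu0 h.1
    have hv2 : v ∉ M₂.verts := by rw [hverts₂]; exact fun h => hv0 h.1
    have hx2 : x ∉ M₂.verts := by rw [hverts₂]; simp
    have hw2 : w ∉ M₂.verts := by rw [hverts₂]; simp
    obtain ⟨M₃, hM₃, hedges₃, hverts₃⟩ := extend_matching hM₂ hux hu2 hx2
    have hv3 : v ∉ M₃.verts := by
      rw [hverts₃]
      rintro (rfl | rfl | h)
      · exact hne rfl
      · exact hv0 hxmem
      · exact hv2 h
    have hw3 : w ∉ M₃.verts := by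
      rw [hverts₃]
      rintro (rfl | rfl | h)
      · exact hu0 hymem
      · exact (M₀.adj_sub hxy).ne rfl
      · exact hw2 h
    obtain ⟨M₄, hM₄, hedges₄, -⟩ := extend_matching hM₃ hvy hv3 hw3
    refine ⟨M₄, hM₄, ?_⟩
    have hne1 : s(u, x) ∉ M₂.edgeSet := fun hmem => hu2 (edge_vert_left hmem)
    have hne2 : s(v, w) ∉ insert s(u, x) M₂.edgeSet := by
      rw [← hedges₃]
      exact fun hmem => hv3 (edge_vert_left hmem)
    rw [hedges₄, hedges₃, Set.ncard_insert_of_notMem hne2 (Set.toFinite _),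
      Set.ncard_insert_of_notMem hne1 (Set.toFinite _), hcard₂]
    omega
  · -- the matching avoids the edge uv, transfer it directly
    refine ⟨⟨M.verts, M.Adj, ?_, M.edge_vert, ⟨fun _ _ h => h.symm⟩⟩, hM, hcard⟩
    intro x y hxy
    refine hGadj x y hxy ?_
    intro hs
    rw [Sym2.eq_iff] at hs
    rcases hs with ⟨rfl, rfl⟩ | ⟨rfl, rfl⟩
    · exact hMuv hxy
    · exact hMuv hxy.symm
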